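/- Let K be a field, k ≥ 1, and let A_1, ..., A_k be square matrices over K with A_i of size n_i × n_i (each n_i ≥ 1). Then there exists a completion M of the block diagonal partial matrix diag(A_1, ..., A_k) with rank(M) = max{rank(A_i) : i = 1, ..., k}. Consequently the minimum of the ranks of all completions of diag(A_1, ..., A_k) equals max{rank(A_i) : i = 1, ..., k}. -/

import Mathlib

/-- `M` is a completion of the block diagonal partial matrix
`diag (A 0, ..., A (k-1))`: its `(i,i)` diagonal block equals `A i` for every `i`. -/
def IsCompletion {K : Type*} [Field K] {k : ℕ} {n : Fin k → ℕ}
    (A : ∀ i : Fin k, Matrix (Fin (n i)) (Fin (n i)) K)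
    (M : Matrix (Σ i : Fin k, Fin (n i)) (Σ i : Fin k, Fin (n i)) K) : Prop :=
  ∀ (i : Fin k) (x y : Fin (n i)), M ⟨i, x⟩ ⟨i, y⟩ = A i x y

/-- Any submatrix (arbitrary row/column selections) has rank at most that of the matrix. -/
lemma rank_submatrix_le_general {K : Type*} [Field K] {m' n' : Type*} [Fintype m'] [Fintype n']
    [DecidableEq m'] (A : Matrix m' m' K) (f g : n' → m') :
    (A.submatrix f g).rank ≤ A.rank := by
  have h : A.submatrix f g =
      ((1 : Matrix m' m' K).submatrix f id) * (A * ((1 : Matrix m' m' K).submatrix id g)) := by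
    ext i j
    simp [Matrix.mul_apply, Matrix.one_apply, Finset.sum_ite_eq, Finset.sum_ite_eq']
  rw [h]
  exact (Matrix.rank_mul_le_right _ _).trans (Matrix.rank_mul_le_left _ _)

/-- Rank factorization: a square matrix of rank at most `r` factors through `K^r`. -/
lemma exists_rank_factorization {K : Type*} [Field K] {a r : ℕ}
    (A : Matrix (Fin a) (Fin a) K) (h : A.rank ≤ r) :
    ∃ (B : Matrix (Fin a) (Fin r) K) (C : Matrix (Fin r) (Fin a) K), B * C = A := by
  classical
  set f := A.mulVecLin with hf
  set V := LinearMap.range f with hV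
  have hfin : Module.finrank K V ≤ r := h
  -- a surjection from K^r onto V
  let d := Module.finrank K V
  let b : Module.Basis (Fin d) K V := Module.finBasis K V
  let g : (Fin r → K) →ₗ[K] V :=
    (Pi.basisFun K (Fin r)).constr K (fun j => if hj : (j : ℕ) < d then b ⟨j, hj⟩ else 0)
  have hg : Function.Surjective g := by
    rw [← LinearMap.range_eq_top, ← top_le_iff, ← b.span_eq, Submodule.span_le]
    rintro _ ⟨i, rfl⟩
    refine ⟨Pi.basisFun K (Fin r) (Fin.castLE hfin i), ?_⟩
    rw [Module.Basis.constr_basis]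
    simp [d, Fin.is_lt]
  -- lift the corestriction of `f` through `g`
  obtain ⟨ℓ, hℓ⟩ := Module.projective_lifting_property g (f.rangeRestrict) hg
  refine ⟨LinearMap.toMatrix' (V.subtype ∘ₗ g), LinearMap.toMatrix' ℓ, ?_⟩
  rw [← LinearMap.toMatrix'_comp]
  have : (V.subtype ∘ₗ g) ∘ₗ ℓ = f := by
    rw [LinearMap.comp_assoc, hℓ]
    ext v
    simp
  rw [this]
  ext i j
  simp [LinearMap.toMatrix'_apply, hf, Matrix.mulVecLin_apply, Matrix.mulVec, dotProduct, mul_ite, Pi.single_apply]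

theorem stmt_1 {K : Type*} [Field K] {k : ℕ} (hk : 0 < k) {n : Fin k → ℕ}
    (hn : ∀ i, 0 < n i)
    (A : ∀ i : Fin k, Matrix (Fin (n i)) (Fin (n i)) K) :
    IsLeast {l : ℕ | ∃ M, IsCompletion A M ∧ M.rank = l}
      (Finset.univ.sup (fun i : Fin k => (A i).rank)) := by
  classical
  set r := Finset.univ.sup (fun i : Fin k => (A i).rank) with hr
  -- lower bound
  have lb : ∀ M : Matrix (Σ i : Fin k, Fin (n i)) (Σ i : Fin k, Fin (n i)) K,
      IsCompletion A M → r ≤ M.rank := by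
    intro M hM
    refine Finset.sup_le fun i _ => ?_
    have : A i = M.submatrix (Sigma.mk i) (Sigma.mk i) := by
      ext x y; exact (hM i x y).symm
    rw [this]
    exact rank_submatrix_le_general M _ _
  constructor
  · -- construct a completion of rank exactly r
    choose B C hBC using fun i =>
      exists_rank_factorization (A i) (Finset.le_sup (f := fun i : Fin k => (A i).rank)
        (Finset.mem_univ i))
    set Bbig : Matrix (Σ i : Fin k, Fin (n i)) (Fin r) K := fun p t => B p.1 p.2 t with hBb
    set Cbig : Matrix (Fin r) (Σ i : Fin k, Fin (n i)) K := fun t q => C q.1 t q.2 with hCb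
    refine ⟨Bbig * Cbig, ?_, ?_⟩
    · intro i x y
      have := congrFun (congrFun (hBC i) x) y
      rw [Matrix.mul_apply]; simpa [Matrix.mul_apply, hBb, hCb] using this
    · refine le_antisymm ?_ (lb _ ?_)
      · exact (Matrix.rank_mul_le_left _ _).trans
          ((Matrix.rank_le_card_width _).trans (by simp))
      · intro i x y
        have := congrFun (congrFun (hBC i) x) y
        rw [Matrix.mul_apply]; simpa [Matrix.mul_apply, hBb, hCb] using this
  · rintro l ⟨M, hM, rfl⟩
    exact lb M hM
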